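/- Full binary trees of height at most k are in bijection with win-loss sequences of k-passthrough unicard games; consequently the number of such win-loss sequences is A_k, where A_1 = 1 and A_{k+1} = 1 + A_k^2. -/
import Mathlib


/-- A full binary tree: every node has zero or two children. -/
inductive FullBinTree : Type
  | leaf : FullBinTree
  | node : FullBinTree → FullBinTree → FullBinTree

/-- Height of a full binary tree; a single leaf has height 1. -/
def FullBinTree.height : FullBinTree → ℕ
  | .leaf => 1
  | .node l r => 1 + max l.height r.height

/-- Merge the level lists of two trees: level `i` of the merge is the concatenation of
the levels `i` of the two trees. -/
def combineLevels : List (List Bool) → List (List Bool) → List (List Bool)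
  | [], ys => ys
  | xs, [] => xs
  | x :: xs, y :: ys => (x ++ y) :: combineLevels xs ys

/-- The levels of a full binary tree, each level read left to right, where internal
nodes are labeled `true` (W) and leaves are labeled `false` (L). -/
def FullBinTree.levels : FullBinTree → List (List Bool)
  | .leaf => [[false]]
  | .node l r => [true] :: combineLevels l.levels r.levels

/-- The win-loss sequence of a full binary tree: its labels read level by level,
left to right within each level (`true` = W on internal nodes, `false` = L on leaves). -/
def FullBinTree.levelOrder (t : FullBinTree) : List Bool := t.levels.flatten

/-- The sequence `A` with `A 1 = 1` and `A (k+1) = 1 + (A k)^2`. -/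
def A : ℕ → ℕ
  | 0 => 0
  | k + 1 => 1 + (A k) ^ 2

/-- Validity predicate on level lists: `Valid n L` means the first level of `L` has
length `n > 0`, and each subsequent level has length twice the number of `true`s in the
previous level, with the list ending exactly when that count hits zero. -/
inductive Valid : ℕ → List (List Bool) → Prop
  | nil : Valid 0 []
  | cons {n : ℕ} {l : List Bool} {rest : List (List Bool)} :
      0 < l.length → l.length = n → Valid (2 * l.count true) rest → Valid n (l :: rest)

lemma valid_zero {L : List (List Bool)} (h : Valid 0 L) : L = [] := by
  cases h with
  | nil => rfl
  | cons hpos hlen _ => omega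

lemma valid_nil {n : ℕ} (h : Valid n []) : n = 0 := by cases h; rfl

lemma valid_combine {n m : ℕ} {L1 L2 : List (List Bool)}
    (h1 : Valid n L1) (h2 : Valid m L2) :
    Valid (n + m) (combineLevels L1 L2) := by
  induction h1 generalizing m L2 with
  | nil =>
    simpa [combineLevels] using h2
  | cons hpos hlen htail ih =>
    cases h2 with
    | nil =>
      simpa [combineLevels] using Valid.cons hpos (by omega) htail
    | cons hpos2 hlen2 htail2 =>
      refine Valid.cons (l := _ ++ _) (by simp; omega) (by simp; omega) ?_
      have := ih htail2
      simpa [List.count_append, Nat.mul_add] using this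

lemma valid_levels (t : FullBinTree) : Valid 1 t.levels := by
  induction t with
  | leaf =>
    exact Valid.cons (by simp) (by simp) (by simpa using Valid.nil)
  | node l r ihl ihr =>
    refine Valid.cons (by simp) (by simp) ?_
    simpa using valid_combine ihl ihr

lemma flatten_inj : ∀ {n : ℕ} {L1 L2 : List (List Bool)},
    Valid n L1 → Valid n L2 → L1.flatten = L2.flatten → L1 = L2 := by
  intro n L1
  induction L1 generalizing n with
  | nil =>
    intro L2 h1 h2 _
    exact (valid_zero (valid_nil h1 ▸ h2)).symm
  | cons a L1' ih =>
    intro L2 h1 h2 hf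
    cases h1 with
    | cons hpos hlen htail =>
      cases h2 with
      | nil => omega
      | cons hpos2 hlen2 htail2 =>
        rename_i l2 rest2
        simp only [List.flatten_cons] at hf
        obtain ⟨he, hrest⟩ := List.append_inj hf (by omega)
        subst he
        exact congrArg _ (ih htail htail2 hrest)

lemma combine_inj : ∀ {n m : ℕ} {A1 A2 B1 B2 : List (List Bool)},
    Valid n A1 → Valid n A2 → Valid m B1 → Valid m B2 →
    combineLevels A1 B1 = combineLevels A2 B2 → A1 = A2 ∧ B1 = B2 := by
  intro n m A1
  induction A1 generalizing n m with
  | nil =>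
    intro A2 B1 B2 h1 h2 hb1 hb2 hc
    have hn : n = 0 := valid_nil h1
    have hA2 : A2 = [] := valid_zero (hn ▸ h2)
    subst hA2
    simp only [combineLevels] at hc
    exact ⟨rfl, hc⟩
  | cons a A1' ih =>
    intro A2 B1 B2 h1 h2 hb1 hb2 hc
    cases h1 with
    | cons hpos hlen htail =>
      cases h2 with
      | nil => omega
      | cons hpos2 hlen2 htail2 =>
        rename_i a2 A2'
        cases hb1 with
        | nil =>
          have hB2 : B2 = [] := valid_zero hb2
          subst hB2
          simp only [combineLevels] at hc
          exact ⟨hc, rfl⟩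
        | cons hbpos hblen hbtail =>
          rename_i b B1'
          cases hb2 with
          | nil => omega
          | cons hbpos2 hblen2 hbtail2 =>
            rename_i b2 B2'
            simp only [combineLevels, List.cons.injEq] at hc
            obtain ⟨hheads, hrest⟩ := hc
            obtain ⟨ha, hb⟩ := List.append_inj hheads (by omega)
            subst ha; subst hb
            obtain ⟨h1', h2'⟩ := ih htail htail2 hbtail hbtail2 hrest
            exact ⟨by rw [h1'], by rw [h2']⟩

lemma levels_inj : ∀ s t : FullBinTree, s.levels = t.levels → s = t := by
  intro s
  induction s with
  | leaf =>
    intro t h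
    cases t with
    | leaf => rfl
    | node l r => simp [FullBinTree.levels] at h
  | node l r ihl ihr =>
    intro t h
    cases t with
    | leaf => simp [FullBinTree.levels] at h
    | node l2 r2 =>
      simp only [FullBinTree.levels, List.cons.injEq, true_and] at h
      obtain ⟨h1, h2⟩ := combine_inj (valid_levels l) (valid_levels l2)
        (valid_levels r) (valid_levels r2) h
      rw [ihl _ h1, ihr _ h2]

lemma levelOrder_injective : Function.Injective FullBinTree.levelOrder := by
  intro s t h
  exact levels_inj s t (flatten_inj (valid_levels s) (valid_levels t) h)

lemma height_pos (t : FullBinTree) : 1 ≤ t.height := by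
  cases t <;> simp [FullBinTree.height]

lemma height_node_le {l r : FullBinTree} {k : ℕ} :
    (FullBinTree.node l r).height ≤ k + 1 ↔ l.height ≤ k ∧ r.height ≤ k := by
  simp [FullBinTree.height]; omega

/-- Trees of height at most `k+1` are a leaf, or a node of two trees of height at most `k`. -/
def treeEquiv (k : ℕ) :
    {t : FullBinTree // t.height ≤ k + 1} ≃
      Unit ⊕ ({t : FullBinTree // t.height ≤ k} × {t : FullBinTree // t.height ≤ k}) where
  toFun t :=
    match t with
    | ⟨.leaf, _⟩ => Sum.inl ()
    | ⟨.node l r, h⟩ =>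
        Sum.inr (⟨l, (height_node_le.mp h).1⟩, ⟨r, (height_node_le.mp h).2⟩)
  invFun x :=
    match x with
    | Sum.inl _ => ⟨.leaf, by simp [FullBinTree.height]⟩
    | Sum.inr (l, r) => ⟨.node l.1 r.1, height_node_le.mpr ⟨l.2, r.2⟩⟩
  left_inv t := by
    obtain ⟨t, ht⟩ := t
    cases t <;> rfl
  right_inv x := by
    rcases x with _ | ⟨⟨l, hl⟩, ⟨r, hr⟩⟩ <;> rfl

lemma finite_le (k : ℕ) : Finite {t : FullBinTree // t.height ≤ k} := by
  induction k with
  | zero =>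
    have : IsEmpty {t : FullBinTree // t.height ≤ 0} := by
      constructor
      rintro ⟨t, ht⟩
      have := height_pos t
      omega
    exact Finite.of_subsingleton
  | succ k ih =>
    exact Finite.of_equiv _ (treeEquiv k).symm

lemma card_le (k : ℕ) : Nat.card {t : FullBinTree // t.height ≤ k} = A k := by
  induction k with
  | zero =>
    have : IsEmpty {t : FullBinTree // t.height ≤ 0} := by
      constructor
      rintro ⟨t, ht⟩
      have := height_pos t
      omega
    rw [Nat.card_of_isEmpty]
    rfl
  | succ k ih =>
    have := finite_le k
    rw [Nat.card_congr (treeEquiv k), Nat.card_sum, Nat.card_prod, ih]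
    simp [A, sq]

theorem win_loss_sequences_biject_full_binary_trees (k : ℕ) (hk : 1 ≤ k) :
    Set.InjOn FullBinTree.levelOrder {t : FullBinTree | t.height ≤ k} ∧
      Set.ncard {t : FullBinTree | t.height ≤ k} = A k := by
  constructor
  · exact fun s _ t _ h => levelOrder_injective h
  · rw [← Nat.card_coe_set_eq]
    exact card_le k
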